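/- Fix real numbers a < b and integers m, r, l ≥ 1. Under the hypotheses of the convergence theorem for characteristic matrices — namely: continuous coefficient matrices A_j(·,k) → A_j uniformly on [a,b] for each j ∈ {0,…,r−1}, fundamental matrix solutions Y_i(·,k) and Y_i with initial data Y^{(j−1)}(a) = δ_{ij} I_m, and continuous linear operators B_k, B : C([a,b], ℂ^{rm}) → ℂ^l with B_k u → B u for every u — the characteristic matrices M_k, M ∈ ℂ^{l×rm} satisfy, for all sufficiently large k: dim ker M_k ≤ dim ker M and dim coker M_k ≤ dim coker M. -/

import Mathlib

attribute [local instance] Matrix.normedAddCommGroup Matrix.normedSpace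

open scoped Classical in
/-- The jet `J(y) = (y, y', …, y⁽ʳ⁻¹⁾)` of a function `y : ℝ → ℂ^m`, as a continuous
map on `[a,b]` with values in `ℂ^{rm}` (junk value `0` if the jet fails to be
continuous, which does not happen for `(r-1)`-times continuously differentiable `y`). -/
noncomputable def jetCM (a b : ℝ) {m : ℕ} (r : ℕ) (y : ℝ → Fin m → ℂ) :
    C(Set.Icc a b, Fin r × Fin m → ℂ) :=
  if h : Continuous fun t : Set.Icc a b =>
      fun p : Fin r × Fin m => iteratedDeriv (p.1 : ℕ) y t.1 p.2
  then ⟨_, h⟩ else 0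

/-- The characteristic matrix `M(L,B) = ([BY₁], …, [BY_r]) ∈ ℂ^{l × rm}`: its column
indexed by `(i,j)` is `B` applied to the jet of the `j`-th column of `Y_i`. -/
noncomputable def charMatrix {m r l : ℕ} (a b : ℝ)
    (B : C(Set.Icc a b, Fin r × Fin m → ℂ) →L[ℂ] (Fin l → ℂ))
    (Y : Fin r → ℝ → Matrix (Fin m) (Fin m) ℂ) :
    Matrix (Fin l) (Fin r × Fin m) ℂ :=
  Matrix.of fun (q : Fin l) (p : Fin r × Fin m) =>
    B (jetCM a b r (fun t v => Y p.1 t v p.2)) q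

section Aux

open Filter Matrix Module Set Real

/-- Lower semicontinuity of matrix rank along a convergent sequence. -/
theorem eventually_rank_le_of_tendsto' {l : ℕ} {n : Type*} [Fintype n] [DecidableEq n]
    (Mseq : ℕ → Matrix (Fin l) n ℂ) (M : Matrix (Fin l) n ℂ)
    (h : Tendsto Mseq atTop (nhds M)) :
    ∀ᶠ k in atTop, M.rank ≤ (Mseq k).rank := by
  classical
  set f := M.mulVecLin with hf
  have hrank : M.rank = finrank ℂ (LinearMap.range f) := rfl
  let bas : Basis (Fin M.rank) ℂ (LinearMap.range f) :=
    finBasisOfFinrankEq ℂ _ hrank.symm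
  have hmem : ∀ i, (bas i : Fin l → ℂ) ∈ LinearMap.range f := fun i => (bas i).2
  choose u hu using hmem
  let p : (Fin M.rank → ℂ) →ₗ[ℂ] (n → ℂ) := (Pi.basisFun ℂ (Fin M.rank)).constr ℂ u
  obtain ⟨pr, hpr⟩ := (LinearMap.range f).subtype.exists_leftInverse_of_injective
    (LinearMap.range f).ker_subtype
  let q : (Fin l → ℂ) →ₗ[ℂ] (Fin M.rank → ℂ) := bas.equivFun.toLinearMap ∘ₗ pr
  have key : q ∘ₗ (f ∘ₗ p) = LinearMap.id := by
    apply (Pi.basisFun ℂ (Fin M.rank)).ext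
    intro i
    have hp : p (Pi.basisFun ℂ (Fin M.rank) i) = u i := Basis.constr_basis _ _ _ _
    have hpri : pr ((bas i : Fin l → ℂ)) = bas i := by
      have := LinearMap.congr_fun hpr (bas i)
      simpa using this
    simp only [LinearMap.comp_apply, hp, hu i, LinearMap.id_apply, q, hpri]
    ext j
    simp [Basis.equivFun_apply, Pi.basisFun_apply, Pi.single_apply, eq_comm]
  set Bm := LinearMap.toMatrix' q with hBm
  set Cm := LinearMap.toMatrix' p with hCm
  have hBMC : Bm * M * Cm = 1 := by
    apply LinearMap.toMatrix'.symm.injective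
    simp only [LinearMap.toMatrix'_symm]
    rw [Matrix.toLin'_apply', Matrix.mulVecLin_mul, Matrix.mulVecLin_mul]
    have hq : Bm.mulVecLin = q := Matrix.toLin'_toMatrix' q
    have hp' : Cm.mulVecLin = p := Matrix.toLin'_toMatrix' p
    rw [hq, hp']
    rw [Matrix.toLin'_one, LinearMap.comp_assoc, key]
  have hcont : Continuous fun X : Matrix (Fin l) n ℂ => (Bm * X * Cm).det :=
    ((continuous_const.matrix_mul continuous_id).matrix_mul continuous_const).matrix_det
  have hdet : Tendsto (fun k => (Bm * Mseq k * Cm).det) atTop (nhds 1) := by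
    have := (hcont.tendsto M).comp h
    simpa [hBMC, Function.comp_def] using this
  have hne : ∀ᶠ k in atTop, (Bm * Mseq k * Cm).det ≠ 0 :=
    hdet (isOpen_ne.mem_nhds (one_ne_zero))
  filter_upwards [hne] with k hk
  have hunit : IsUnit (Bm * Mseq k * Cm) :=
    (Matrix.isUnit_iff_isUnit_det _).2 (isUnit_iff_ne_zero.2 hk)
  have h1 : (Bm * Mseq k * Cm).rank = M.rank := by
    rw [Matrix.rank_of_isUnit _ hunit, Fintype.card_fin]
  calc M.rank = (Bm * Mseq k * Cm).rank := h1.symm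
    _ = (Bm * (Mseq k * Cm)).rank := by rw [Matrix.mul_assoc]
    _ ≤ (Mseq k * Cm).rank := Matrix.rank_mul_le_right _ _
    _ ≤ (Mseq k).rank := Matrix.rank_mul_le_left _ _

/-- Submultiplicativity (up to the dimension factor) of the entrywise sup norm. -/
theorem matrix_norm_mul_le' {m : ℕ} (X Y : Matrix (Fin m) (Fin m) ℂ) :
    ‖X * Y‖ ≤ m * ‖X‖ * ‖Y‖ := by
  rw [Matrix.norm_le_iff (by positivity)]
  intro i j
  calc ‖(X * Y) i j‖ = ‖∑ p, X i p * Y p j‖ := by rw [Matrix.mul_apply]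
    _ ≤ ∑ p, ‖X i p * Y p j‖ := norm_sum_le _ _
    _ ≤ ∑ _p : Fin m, ‖X‖ * ‖Y‖ := by
        refine Finset.sum_le_sum fun p _ => ?_
        rw [norm_mul]
        exact mul_le_mul (Matrix.norm_entry_le_entrywise_sup_norm X)
          (Matrix.norm_entry_le_entrywise_sup_norm Y) (norm_nonneg _) (norm_nonneg _)
    _ = m * ‖X‖ * ‖Y‖ := by
        rw [Finset.sum_const, Finset.card_univ, Fintype.card_fin, nsmul_eq_mul, mul_assoc]

set_option maxHeartbeats 1000000 in
/-- Grönwall-type stability: jets of solutions converge uniformly on `[a,b]` when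
the coefficients converge uniformly and the initial jets agree. -/
theorem jet_conv
    (a b : ℝ) (hab : a < b) {m r : ℕ} (hm : 0 < m) (hr : 0 < r)
    (A : Fin r → ℝ → Matrix (Fin m) (Fin m) ℂ) (hA : ∀ j, Continuous (A j))
    (Aseq : ℕ → Fin r → ℝ → Matrix (Fin m) (Fin m) ℂ)
    (hAconv : ∀ j, TendstoUniformlyOn (fun k t => Aseq k j t) (A j)
      Filter.atTop (Set.Icc a b))
    (Y : ℝ → Matrix (Fin m) (Fin m) ℂ)
    (Yseq : ℕ → ℝ → Matrix (Fin m) (Fin m) ℂ)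
    (hYsmooth : ContDiff ℝ r Y)
    (hYseqsmooth : ∀ k, ContDiff ℝ r (Yseq k))
    (hYode : ∀ t, iteratedDeriv r Y t +
        ∑ j : Fin r, A j t * iteratedDeriv (j : ℕ) Y t = 0)
    (hYseqode : ∀ k t, iteratedDeriv r (Yseq k) t +
        ∑ j : Fin r, Aseq k j t * iteratedDeriv (j : ℕ) (Yseq k) t = 0)
    (hinit : ∀ k, ∀ j : Fin r, iteratedDeriv (j : ℕ) (Yseq k) a = iteratedDeriv (j : ℕ) Y a) :
    ∀ ε > 0, ∀ᶠ k in atTop, ∀ t ∈ Set.Icc a b, ∀ j : Fin r,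
      ‖iteratedDeriv (j : ℕ) (Yseq k) t - iteratedDeriv (j : ℕ) Y t‖ ≤ ε := by
  have hcontY : ∀ j : Fin r, Continuous (iteratedDeriv (j : ℕ) Y) := fun j =>
    hYsmooth.continuous_iteratedDeriv _ (by exact_mod_cast j.2.le)
  obtain ⟨CY0, hCY0⟩ := (isCompact_Icc (a := a) (b := b)).exists_bound_of_continuousOn
    (Continuous.continuousOn (continuous_pi fun j : Fin r => (hcontY j)))
  set CY := max CY0 0 with hCY
  have hCYnn : 0 ≤ CY := le_max_right _ _
  have hCYb : ∀ t ∈ Set.Icc a b, ∀ j : Fin r, ‖iteratedDeriv (j : ℕ) Y t‖ ≤ CY := by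
    intro t ht j
    exact le_trans (norm_le_pi_norm (fun j : Fin r => iteratedDeriv (j : ℕ) Y t) j)
      (le_trans (hCY0 t ht) (le_max_left _ _))
  obtain ⟨CA0, hCA0⟩ := (isCompact_Icc (a := a) (b := b)).exists_bound_of_continuousOn
    (Continuous.continuousOn (continuous_pi fun j : Fin r => (hA j)))
  set CA := max CA0 0 with hCA
  have hCAnn : 0 ≤ CA := le_max_right _ _
  have hCAb : ∀ t ∈ Set.Icc a b, ∀ j : Fin r, ‖A j t‖ ≤ CA := by
    intro t ht j
    exact le_trans (norm_le_pi_norm (fun j : Fin r => A j t) j)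
      (le_trans (hCA0 t ht) (le_max_left _ _))
  set K : ℝ := m * r * (CA + 1) + 1 with hK
  have hKpos : 0 < K := by positivity
  set G : ℝ := exp (K * (b - a)) / K with hG
  have hGpos : 0 < G := by positivity
  intro ε hε
  set η : ℝ := min 1 (ε / (m * r * (CY + 1) * G)) with hη
  have hηpos : 0 < η := by
    apply lt_min one_pos
    apply div_pos hε
    have hm' : (0:ℝ) < m := by exact_mod_cast hm
    have hr' : (0:ℝ) < r := by exact_mod_cast hr
    positivity
  have hev : ∀ᶠ k in atTop, ∀ j : Fin r, ∀ t ∈ Set.Icc a b, ‖Aseq k j t - A j t‖ ≤ η := by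
    rw [eventually_all]
    intro j
    have := (Metric.tendstoUniformlyOn_iff.1 (hAconv j)) η hηpos
    filter_upwards [this] with k hk t ht
    have := hk t ht
    rw [dist_eq_norm] at this
    have : ‖A j t - Aseq k j t‖ ≤ η := le_of_lt this
    calc ‖Aseq k j t - A j t‖ = ‖A j t - Aseq k j t‖ := by rw [norm_sub_rev]
      _ ≤ η := this
  filter_upwards [hev] with k hk
  set F : ℝ → (Fin r → Matrix (Fin m) (Fin m) ℂ) :=
    fun t j => iteratedDeriv (j : ℕ) (Yseq k) t - iteratedDeriv (j : ℕ) Y t with hF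
  set F' : ℝ → (Fin r → Matrix (Fin m) (Fin m) ℂ) :=
    fun t j => iteratedDeriv ((j : ℕ) + 1) (Yseq k) t - iteratedDeriv ((j : ℕ) + 1) Y t with hF'
  set ε' : ℝ := m * r * η * CY with hε'
  have hε'nn : 0 ≤ ε' := by positivity
  have hcontYk : ∀ j : Fin r, Continuous (iteratedDeriv (j : ℕ) (Yseq k)) := fun j =>
    (hYseqsmooth k).continuous_iteratedDeriv _ (by exact_mod_cast j.2.le)
  have hFcont : Continuous F := continuous_pi fun j => (hcontYk j).sub (hcontY j)
  have hFa : F a = 0 := by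
    funext j
    simp [hF, hinit k j]
  have hderiv : ∀ t, HasDerivAt F (F' t) t := by
    intro t
    apply hasDerivAt_pi.2
    intro j
    have h1 : HasDerivAt (iteratedDeriv (j : ℕ) (Yseq k))
        (iteratedDeriv ((j : ℕ) + 1) (Yseq k) t) t := by
      rw [iteratedDeriv_succ]
      exact (((hYseqsmooth k).differentiable_iteratedDeriv _
        (by exact_mod_cast j.2)) t).hasDerivAt
    have h2 : HasDerivAt (iteratedDeriv (j : ℕ) Y)
        (iteratedDeriv ((j : ℕ) + 1) Y t) t := by
      rw [iteratedDeriv_succ]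
      exact ((hYsmooth.differentiable_iteratedDeriv _ (by exact_mod_cast j.2)) t).hasDerivAt
    exact h1.sub h2
  have hbound : ∀ t ∈ Set.Ico a b, ‖F' t‖ ≤ K * ‖F t‖ + ε' := by
    intro t ht
    have ht' : t ∈ Set.Icc a b := Set.Ico_subset_Icc_self ht
    have hnn : 0 ≤ K * ‖F t‖ + ε' := by positivity
    rw [pi_norm_le_iff_of_nonneg hnn]
    intro j
    rcases lt_or_eq_of_le (Nat.succ_le_of_lt j.2) with hlt | heq
    · have : F' t j = F t ⟨(j : ℕ) + 1, hlt⟩ := rfl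
      rw [this]
      calc ‖F t ⟨(j : ℕ) + 1, hlt⟩‖ ≤ ‖F t‖ := norm_le_pi_norm _ _
        _ ≤ K * ‖F t‖ + ε' := by
            have h1 : 1 ≤ K := by
              have h0 : (0:ℝ) ≤ (m:ℝ) * r * (CA + 1) := by positivity
              rw [hK]; linarith
            nlinarith [norm_nonneg (F t), hε'nn, h1]
    · have hYr : iteratedDeriv r Y t = -∑ i : Fin r, A i t * iteratedDeriv (i : ℕ) Y t :=
        eq_neg_of_add_eq_zero_left (hYode t)
      have hYkr : iteratedDeriv r (Yseq k) t =
          -∑ i : Fin r, Aseq k i t * iteratedDeriv (i : ℕ) (Yseq k) t :=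
        eq_neg_of_add_eq_zero_left (hYseqode k t)
      have hid : F' t j = -(∑ i : Fin r, Aseq k i t * F t i)
          - ∑ i : Fin r, (Aseq k i t - A i t) * iteratedDeriv (i : ℕ) Y t := by
        show iteratedDeriv ((j : ℕ) + 1) (Yseq k) t - iteratedDeriv ((j : ℕ) + 1) Y t = _
        have heq' : (j : ℕ) + 1 = r := heq
        rw [heq', hYr, hYkr]
        simp only [hF, mul_sub, sub_mul, Finset.sum_sub_distrib]
        abel
      rw [hid]
      have hb1 : ‖∑ i : Fin r, Aseq k i t * F t i‖ ≤ (m * r * (CA + 1)) * ‖F t‖ := by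
        calc ‖∑ i : Fin r, Aseq k i t * F t i‖ ≤ ∑ i : Fin r, ‖Aseq k i t * F t i‖ :=
              norm_sum_le _ _
          _ ≤ ∑ _i : Fin r, m * (CA + 1) * ‖F t‖ := by
              refine Finset.sum_le_sum fun i _ => ?_
              calc ‖Aseq k i t * F t i‖ ≤ m * ‖Aseq k i t‖ * ‖F t i‖ :=
                    matrix_norm_mul_le' _ _
                _ ≤ m * (CA + 1) * ‖F t‖ := by
                    have hAi : ‖Aseq k i t‖ ≤ CA + 1 := by
                      calc ‖Aseq k i t‖ ≤ ‖Aseq k i t - A i t‖ + ‖A i t‖ := by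
                            simpa using norm_add_le (Aseq k i t - A i t) (A i t)
                        _ ≤ η + CA := add_le_add (hk i t ht') (hCAb t ht' i)
                        _ ≤ 1 + CA := by
                            have : η ≤ 1 := min_le_left _ _
                            linarith
                        _ = CA + 1 := by ring
                    have hFi : ‖F t i‖ ≤ ‖F t‖ := norm_le_pi_norm _ _
                    have hm0 : (0:ℝ) ≤ m := by positivity
                    have := mul_le_mul hAi hFi (norm_nonneg _) (by positivity : (0:ℝ) ≤ CA + 1)
                    nlinarith [norm_nonneg (Aseq k i t), norm_nonneg (F t i)]
          _ = (m * r * (CA + 1)) * ‖F t‖ := by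
              rw [Finset.sum_const, Finset.card_univ, Fintype.card_fin, nsmul_eq_mul]; ring
      have hb2 : ‖∑ i : Fin r, (Aseq k i t - A i t) * iteratedDeriv (i : ℕ) Y t‖ ≤ ε' := by
        calc ‖∑ i : Fin r, (Aseq k i t - A i t) * iteratedDeriv (i : ℕ) Y t‖
            ≤ ∑ i : Fin r, ‖(Aseq k i t - A i t) * iteratedDeriv (i : ℕ) Y t‖ := norm_sum_le _ _
          _ ≤ ∑ _i : Fin r, m * η * CY := by
              refine Finset.sum_le_sum fun i _ => ?_
              calc ‖(Aseq k i t - A i t) * iteratedDeriv (i : ℕ) Y t‖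
                  ≤ m * ‖Aseq k i t - A i t‖ * ‖iteratedDeriv (i : ℕ) Y t‖ :=
                    matrix_norm_mul_le' _ _
                _ ≤ m * η * ‖iteratedDeriv (i : ℕ) Y t‖ := by
                    have hm0 : (0:ℝ) ≤ m := by positivity
                    exact mul_le_mul_of_nonneg_right
                      (mul_le_mul_of_nonneg_left (hk i t ht') hm0) (norm_nonneg _)
                _ ≤ m * η * CY := by
                    exact mul_le_mul_of_nonneg_left (hCYb t ht' i) (by positivity)
          _ = ε' := by
              rw [Finset.sum_const, Finset.card_univ, Fintype.card_fin, nsmul_eq_mul, hε']; ring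
      calc ‖-(∑ i : Fin r, Aseq k i t * F t i)
            - ∑ i : Fin r, (Aseq k i t - A i t) * iteratedDeriv (i : ℕ) Y t‖
          ≤ ‖∑ i : Fin r, Aseq k i t * F t i‖
            + ‖∑ i : Fin r, (Aseq k i t - A i t) * iteratedDeriv (i : ℕ) Y t‖ := by
            rw [show -(∑ i : Fin r, Aseq k i t * F t i)
                - ∑ i : Fin r, (Aseq k i t - A i t) * iteratedDeriv (i : ℕ) Y t
                = -((∑ i : Fin r, Aseq k i t * F t i)
                  + ∑ i : Fin r, (Aseq k i t - A i t) * iteratedDeriv (i : ℕ) Y t) from by abel,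
              norm_neg]
            exact norm_add_le _ _
        _ ≤ (m * r * (CA + 1)) * ‖F t‖ + ε' := add_le_add hb1 hb2
        _ ≤ K * ‖F t‖ + ε' := by
            have : (m * r * (CA + 1)) * ‖F t‖ ≤ K * ‖F t‖ := by
              apply mul_le_mul_of_nonneg_right _ (norm_nonneg _)
              rw [hK]; linarith
            linarith
  have hgron := norm_le_gronwallBound_of_norm_deriv_right_le (f := F) (f' := F')
    (δ := 0) (K := K) (ε := ε') (a := a) (b := b)
    hFcont.continuousOn (fun t _ => (hderiv t).hasDerivWithinAt)
    (by rw [hFa]; simp) hbound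
  intro t ht j
  have hFt := hgron t ht
  have hgb : gronwallBound 0 K ε' (t - a) ≤ ε := by
    rw [gronwallBound_of_K_ne_0 (ne_of_gt hKpos)]
    have hta : 0 ≤ t - a := by linarith [ht.1]
    have htb : t - a ≤ b - a := by linarith [ht.2]
    have hexp : exp (K * (t - a)) - 1 ≤ exp (K * (b - a)) := by
      have := exp_le_exp.2 (mul_le_mul_of_nonneg_left htb (le_of_lt hKpos))
      linarith
    have h1 : ε' / K * (exp (K * (t - a)) - 1) ≤ ε' * G := by
      calc ε' / K * (exp (K * (t - a)) - 1) ≤ ε' / K * exp (K * (b - a)) :=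
            mul_le_mul_of_nonneg_left hexp (by positivity)
        _ = ε' * G := by rw [hG]; ring
    have h2 : ε' * G ≤ ε := by
      have hηle : η ≤ ε / (m * r * (CY + 1) * G) := min_le_right _ _
      have hm' : (0:ℝ) < m := by exact_mod_cast hm
      have hr' : (0:ℝ) < r := by exact_mod_cast hr
      have hden : (0:ℝ) < m * r * (CY + 1) * G := by positivity
      have := (le_div_iff₀ hden).1 hηle
      calc ε' * G = (m * r * CY) * G * η := by rw [hε']; ring
        _ ≤ (m * r * (CY + 1)) * G * η := by
            apply mul_le_mul_of_nonneg_right _ (le_of_lt hηpos)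
            apply mul_le_mul_of_nonneg_right _ (le_of_lt hGpos)
            nlinarith
        _ ≤ ε := by nlinarith
    simp only [zero_mul, zero_add]
    linarith
  have : ‖F t j‖ ≤ ‖F t‖ := norm_le_pi_norm _ _
  calc ‖iteratedDeriv (j : ℕ) (Yseq k) t - iteratedDeriv (j : ℕ) Y t‖ = ‖F t j‖ := rfl
    _ ≤ ‖F t‖ := this
    _ ≤ gronwallBound 0 K ε' (t - a) := hFt
    _ ≤ ε := hgb

/-- Extracting the `j`-th column of a matrix, as a continuous linear map. -/
noncomputable def colCLM (m : ℕ) (j : Fin m) : Matrix (Fin m) (Fin m) ℂ →L[ℝ] (Fin m → ℂ) :=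
  ContinuousLinearMap.pi fun v => (ContinuousLinearMap.proj j).comp
    (ContinuousLinearMap.proj (R := ℝ) (φ := fun _ : Fin m => Fin m → ℂ) v)

theorem iteratedDeriv_clm_comp {F G : Type*} [NormedAddCommGroup F] [NormedSpace ℝ F]
    [NormedAddCommGroup G] [NormedSpace ℝ G] (g : F →L[ℝ] G) {f : ℝ → F} {N : ℕ∞}
    (hf : ContDiff ℝ N f) {n : ℕ} (hn : (n : ℕ∞) ≤ N) (x : ℝ) :
    iteratedDeriv n (fun t => g (f t)) x = g (iteratedDeriv n f x) := by
  rw [iteratedDeriv_eq_iteratedFDeriv, iteratedDeriv_eq_iteratedFDeriv,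
    show (fun t => g (f t)) = g ∘ f from rfl,
    g.iteratedFDeriv_comp_left (x := x) hf.contDiffAt (by exact_mod_cast hn)]
  rfl

/-- The jet of the `j`-th column of a `C^r` matrix-valued function. -/
theorem jetCM_col (a b : ℝ) {m r : ℕ} {Ym : ℝ → Matrix (Fin m) (Fin m) ℂ}
    (hYm : ContDiff ℝ r Ym) (j : Fin m) (t : Set.Icc a b) (p : Fin r × Fin m) :
    jetCM a b r (fun s v => Ym s v j) t p = iteratedDeriv (p.1 : ℕ) Ym t.1 p.2 j := by
  have key : ∀ (n : ℕ), (n : ℕ∞) ≤ (r : ℕ∞) → ∀ x : ℝ,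
      iteratedDeriv n (fun s v => Ym s v j) x = colCLM m j (iteratedDeriv n Ym x) :=
    fun n hn x => iteratedDeriv_clm_comp (colCLM m j) hYm hn x
  have hcol : ContDiff ℝ r (fun s v => Ym s v j) := (colCLM m j).contDiff.comp hYm
  have hcont : Continuous fun t : Set.Icc a b =>
      fun p : Fin r × Fin m => iteratedDeriv (p.1 : ℕ) (fun s v => Ym s v j) t.1 p.2 := by
    apply continuous_pi
    intro p
    have h1 : Continuous fun x : ℝ => iteratedDeriv (p.1 : ℕ) (fun s v => Ym s v j) x p.2 :=
      (continuous_apply p.2).comp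
        (hcol.continuous_iteratedDeriv _ (by exact_mod_cast p.1.2.le))
    exact h1.comp continuous_subtype_val
  rw [jetCM, dif_pos hcont]
  show iteratedDeriv (p.1 : ℕ) (fun s v => Ym s v j) t.1 p.2 = _
  rw [key p.1 (by exact_mod_cast p.1.2.le) t.1]
  rfl

end Aux

/-- Under the hypotheses of the convergence theorem for characteristic matrices
(uniform convergence of the coefficients on `[a,b]` and strong convergence of the
boundary operators), for all sufficiently large `k` the kernel and cokernel
dimensions of the characteristic matrix `M_k` are bounded by those of `M`. -/
theorem kernel_cokernel_of_characteristic_matrices_semicontinuous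
    (a b : ℝ) (hab : a < b) (m r l : ℕ) (hm : 0 < m) (hr : 0 < r) (hl : 0 < l)
    (A : Fin r → ℝ → Matrix (Fin m) (Fin m) ℂ) (hA : ∀ j, Continuous (A j))
    (Aseq : ℕ → Fin r → ℝ → Matrix (Fin m) (Fin m) ℂ)
    (hAseq : ∀ k j, Continuous (Aseq k j))
    (hAconv : ∀ j, TendstoUniformlyOn (fun k t => Aseq k j t) (A j)
      Filter.atTop (Set.Icc a b))
    (Y : Fin r → ℝ → Matrix (Fin m) (Fin m) ℂ)
    (Yseq : ℕ → Fin r → ℝ → Matrix (Fin m) (Fin m) ℂ)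
    (hYsmooth : ∀ i, ContDiff ℝ r (Y i))
    (hYseqsmooth : ∀ k i, ContDiff ℝ r (Yseq k i))
    (hYode : ∀ i t, iteratedDeriv r (Y i) t +
        ∑ j : Fin r, A j t * iteratedDeriv (j : ℕ) (Y i) t = 0)
    (hYseqode : ∀ k i t, iteratedDeriv r (Yseq k i) t +
        ∑ j : Fin r, Aseq k j t * iteratedDeriv (j : ℕ) (Yseq k i) t = 0)
    (hYinit : ∀ i j : Fin r,
        iteratedDeriv (j : ℕ) (Y i) a = if i = j then (1 : Matrix (Fin m) (Fin m) ℂ) else 0)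
    (hYseqinit : ∀ k, ∀ i j : Fin r,
        iteratedDeriv (j : ℕ) (Yseq k i) a =
          if i = j then (1 : Matrix (Fin m) (Fin m) ℂ) else 0)
    (B : C(Set.Icc a b, Fin r × Fin m → ℂ) →L[ℂ] (Fin l → ℂ))
    (Bseq : ℕ → C(Set.Icc a b, Fin r × Fin m → ℂ) →L[ℂ] (Fin l → ℂ))
    (hBconv : ∀ u, Filter.Tendsto (fun k => Bseq k u) Filter.atTop (nhds (B u))) :
    ∀ᶠ k in Filter.atTop,
      Module.finrank ℂ (LinearMap.ker (charMatrix a b (Bseq k) (Yseq k)).mulVecLin) ≤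
        Module.finrank ℂ (LinearMap.ker (charMatrix a b B Y).mulVecLin) ∧
      Module.finrank ℂ
          ((Fin l → ℂ) ⧸ LinearMap.range (charMatrix a b (Bseq k) (Yseq k)).mulVecLin) ≤
        Module.finrank ℂ ((Fin l → ℂ) ⧸ LinearMap.range (charMatrix a b B Y).mulVecLin) := by
  classical
  -- uniform boundedness of the boundary operators
  obtain ⟨Cb, hCb⟩ : ∃ C, ∀ k, ‖Bseq k‖ ≤ C := by
    apply banach_steinhaus
    intro x
    obtain ⟨c, hc⟩ := ((hBconv x).norm).bddAbove_range
    exact ⟨c, fun k => hc (Set.mem_range_self k)⟩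
  have hCbnn : 0 ≤ Cb := le_trans (norm_nonneg (Bseq 0)) (hCb 0)
  -- entrywise convergence of the characteristic matrices
  have hentry : ∀ (p : Fin r × Fin m),
      Filter.Tendsto (fun k => Bseq k (jetCM a b r (fun t v => Yseq k p.1 t v p.2)))
        Filter.atTop (nhds (B (jetCM a b r (fun t v => Y p.1 t v p.2)))) := by
    rintro ⟨i, j⟩
    set u : ℕ → C(Set.Icc a b, Fin r × Fin m → ℂ) :=
      fun k => jetCM a b r (fun t v => Yseq k i t v j) with hu
    set u0 : C(Set.Icc a b, Fin r × Fin m → ℂ) := jetCM a b r (fun t v => Y i t v j) with hu0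
    have hjet := jet_conv a b hab hm hr A hA Aseq hAconv (Y i) (fun k => Yseq k i)
      (hYsmooth i) (fun k => hYseqsmooth k i) (hYode i) (fun k t => hYseqode k i t)
      (fun k j' => by rw [hYseqinit k i j', hYinit i j'])
    have huconv : Filter.Tendsto (fun k => ‖u k - u0‖) Filter.atTop (nhds 0) := by
      rw [Metric.tendsto_atTop]
      intro ε hε
      obtain ⟨N, hN⟩ := Filter.eventually_atTop.1 (hjet (ε / 2) (by linarith))
      refine ⟨N, fun k hk => ?_⟩
      have hnorm : ‖u k - u0‖ ≤ ε / 2 := by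
        rw [ContinuousMap.norm_le _ (by linarith)]
        intro x
        rw [ContinuousMap.sub_apply]
        rw [pi_norm_le_iff_of_nonneg (by linarith)]
        intro p
        rw [Pi.sub_apply]
        have e1 : u k x p = iteratedDeriv (p.1 : ℕ) (Yseq k i) x.1 p.2 j :=
          jetCM_col a b (hYseqsmooth k i) j x p
        have e2 : u0 x p = iteratedDeriv (p.1 : ℕ) (Y i) x.1 p.2 j :=
          jetCM_col a b (hYsmooth i) j x p
        have : u k x p - u0 x p =
            (iteratedDeriv (p.1 : ℕ) (Yseq k i) x.1 - iteratedDeriv (p.1 : ℕ) (Y i) x.1) p.2 j := by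
          rw [e1, e2]; rfl
        rw [this]
        exact le_trans (Matrix.norm_entry_le_entrywise_sup_norm _)
          (hN k hk x.1 x.2 p.1)
      rw [Real.dist_eq, sub_zero, abs_of_nonneg (norm_nonneg _)]
      linarith
    rw [tendsto_iff_norm_sub_tendsto_zero]
    have hb2 : Filter.Tendsto (fun k => ‖Bseq k u0 - B u0‖) Filter.atTop (nhds 0) :=
      tendsto_iff_norm_sub_tendsto_zero.1 (hBconv u0)
    have hbound : ∀ k, ‖Bseq k (u k) - B u0‖ ≤ Cb * ‖u k - u0‖ + ‖Bseq k u0 - B u0‖ := by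
      intro k
      calc ‖Bseq k (u k) - B u0‖
          = ‖(Bseq k (u k) - Bseq k u0) + (Bseq k u0 - B u0)‖ := by abel_nf
        _ ≤ ‖Bseq k (u k) - Bseq k u0‖ + ‖Bseq k u0 - B u0‖ := norm_add_le _ _
        _ ≤ Cb * ‖u k - u0‖ + ‖Bseq k u0 - B u0‖ := by
            have : Bseq k (u k) - Bseq k u0 = Bseq k (u k - u0) := by
              rw [map_sub]
            rw [this]
            exact add_le_add (le_trans ((Bseq k).le_opNorm _)
              (mul_le_mul_of_nonneg_right (hCb k) (norm_nonneg _))) le_rfl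
    have hlim : Filter.Tendsto (fun k => Cb * ‖u k - u0‖ + ‖Bseq k u0 - B u0‖)
        Filter.atTop (nhds 0) := by
      have := (huconv.const_mul Cb).add hb2
      simpa using this
    exact squeeze_zero (fun k => norm_nonneg _) hbound hlim
  -- convergence of the characteristic matrices
  have hM : Filter.Tendsto (fun k => charMatrix a b (Bseq k) (Yseq k)) Filter.atTop
      (nhds (charMatrix a b B Y)) := by
    refine Metric.tendsto_atTop.2 ?_
    intro ε hε
    have hev : ∀ᶠ k in Filter.atTop, ∀ q : Fin l, ∀ p : Fin r × Fin m,
        ‖charMatrix a b (Bseq k) (Yseq k) q p - charMatrix a b B Y q p‖ ≤ ε / 2 := by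
      rw [Filter.eventually_all]
      intro q
      rw [Filter.eventually_all]
      intro p
      have h1 : Filter.Tendsto (fun k => charMatrix a b (Bseq k) (Yseq k) q p)
          Filter.atTop (nhds (charMatrix a b B Y q p)) := by
        have := ((continuous_apply q).tendsto _).comp (hentry p)
        exact this
      have := tendsto_iff_norm_sub_tendsto_zero.1 h1
      have h2 := (Metric.tendsto_atTop.1 this) (ε / 2) (by linarith)
      obtain ⟨N, hN⟩ := h2
      rw [Filter.eventually_atTop]
      refine ⟨N, fun k hk => ?_⟩
      have := hN k hk
      rw [Real.dist_eq, sub_zero, abs_of_nonneg (norm_nonneg _)] at this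
      linarith
    obtain ⟨N, hN⟩ := Filter.eventually_atTop.1 hev
    refine ⟨N, fun k hk => ?_⟩
    rw [dist_eq_norm]
    have : ‖charMatrix a b (Bseq k) (Yseq k) - charMatrix a b B Y‖ ≤ ε / 2 := by
      rw [Matrix.norm_le_iff (by linarith)]
      intro q p
      have : (charMatrix a b (Bseq k) (Yseq k) - charMatrix a b B Y) q p =
          charMatrix a b (Bseq k) (Yseq k) q p - charMatrix a b B Y q p := rfl
      rw [this]
      exact hN k hk q p
    linarith
  -- rank semicontinuity and conclusion
  have hrk := eventually_rank_le_of_tendsto' _ _ hM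
  filter_upwards [hrk] with k hk
  have hk' : Module.finrank ℂ (LinearMap.range (charMatrix a b B Y).mulVecLin) ≤
      Module.finrank ℂ (LinearMap.range (charMatrix a b (Bseq k) (Yseq k)).mulVecLin) := hk
  constructor
  · have e1 := LinearMap.finrank_range_add_finrank_ker
      (charMatrix a b (Bseq k) (Yseq k)).mulVecLin
    have e2 := LinearMap.finrank_range_add_finrank_ker (charMatrix a b B Y).mulVecLin
    omega
  · have e1 := Submodule.finrank_quotient_add_finrank
      (LinearMap.range (charMatrix a b (Bseq k) (Yseq k)).mulVecLin)
    have e2 := Submodule.finrank_quotient_add_finrank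
      (LinearMap.range (charMatrix a b B Y).mulVecLin)
    omega
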